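/- arXiv:2512.22849 — 3 statements merged into one kernel-verified Lean document; each statement's English description precedes it below -/
import Mathlib

section
/- Let G be a profinite group isomorphic to Ẑ × I with I finite cyclic, acting continuously on a finite abelian group M. Then the continuous cohomology group H¹(G, M) fits in a short exact sequence 1 → H¹(Ẑ, M^I) → H¹(G, M) → H¹(I, M)^{Ẑ} → 1, and in particular |H¹(G, M)| = |M^{G}| · |H¹(I, M)^{G}| where H¹(Ẑ, M^I) has order |M^G|. -/
/-! Continuous group cohomology `H¹` in degree one, defined concretely via continuous
1-cocycles modulo continuous 1-coboundaries, and the inflation–restriction exact sequence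
for `Ẑ × I` with `I` finite cyclic, where `Ẑ = ∏_ℓ ℤ_ℓ` is the profinite completion of `ℤ`. -/

/-- The multiplicative group structure on `AddAut A` (composition), as in the older Mathlib,
where `AddAut A` was a multiplicative group. -/
instance addAutMulGroup (A : Type*) [Add A] : Group (AddAut A) where
  mul g h := AddEquiv.trans h g
  one := AddEquiv.refl _
  inv := AddEquiv.symm
  mul_assoc _ _ _ := rfl
  one_mul _ := rfl
  mul_one _ := rfl
  inv_mul_cancel := AddEquiv.self_trans_symm

theorem addAut_mul_apply {A : Type*} [Add A] (e₁ e₂ : AddAut A) (m : A) :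
    (e₁ * e₂) m = e₁ (e₂ m) :=
  rfl

section ContCohomology

variable (G : Type*) [Group G] [TopologicalSpace G]
variable (M : Type*) [AddCommGroup M] [TopologicalSpace M] [DiscreteTopology M]
variable (ρ : G →* AddAut M)

/-- Continuous 1-cocycles. -/
def contZ1 : AddSubgroup (G → M) where
  carrier := {f | Continuous f ∧ ∀ g h : G, f (g * h) = f g + ρ g (f h)}
  zero_mem' := ⟨continuous_const, fun g h => by simp⟩
  add_mem' := fun {f₁ f₂} h1 h2 => ⟨h1.1.add h2.1, fun g h => by
    simp only [Pi.add_apply, h1.2 g h, h2.2 g h, map_add]; abel⟩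
  neg_mem' := fun {f} hf => ⟨hf.1.neg, fun g h => by
    simp only [Pi.neg_apply, hf.2 g h, map_neg]; abel⟩

/-- Continuous 1-coboundaries. -/
def contB1 : AddSubgroup (G → M) where
  carrier := {f | Continuous f ∧ ∃ m : M, ∀ g : G, f g = ρ g m - m}
  zero_mem' := ⟨continuous_const, 0, fun g => by simp⟩
  add_mem' := fun {f₁ f₂} h1 h2 => by
    obtain ⟨c1, m₁, hm1⟩ := h1
    obtain ⟨c2, m₂, hm2⟩ := h2
    exact ⟨c1.add c2, m₁ + m₂, fun g => by
      simp only [Pi.add_apply, hm1 g, hm2 g, map_add]; abel⟩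
  neg_mem' := fun {f} hf => by
    obtain ⟨c, m, hm⟩ := hf
    exact ⟨c.neg, -m, fun g => by
      simp only [Pi.neg_apply, hm g, map_neg]; abel⟩

/-- Continuous first cohomology `H¹(G, M)`. -/
def contH1 := contZ1 G M ρ ⧸ (contB1 G M ρ).addSubgroupOf (contZ1 G M ρ)

instance : AddCommGroup (contH1 G M ρ) := QuotientAddGroup.Quotient.addCommGroup _

/-- The subgroup of `G`-invariants `M^G`. -/
def invariantsSubgroup : AddSubgroup M where
  carrier := {m | ∀ g : G, ρ g m = m}
  zero_mem' := fun g => by simp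
  add_mem' := fun {a b} ha hb g => by rw [map_add, ha g, hb g]
  neg_mem' := fun {a} ha g => by rw [map_neg, ha g]

variable {G M ρ}

/-- The map on continuous 1-cocycles induced by an automorphism of `M` commuting with the
`G`-action. -/
def z1Push (e : AddAut M) (hcomm : ∀ (g : G) (m : M), ρ g (e m) = e (ρ g m)) :
    contZ1 G M ρ →+ contZ1 G M ρ where
  toFun f := ⟨fun g => e (f.1 g),
    continuous_of_discreteTopology.comp f.2.1, fun g h => by
      dsimp only
      rw [f.2.2 g h, map_add, hcomm]⟩
  map_zero' := by ext g; simp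
  map_add' f₁ f₂ := by ext g; simp

/-- The induced map on `H¹(G, M)`. -/
def h1Push (e : AddAut M) (hcomm : ∀ (g : G) (m : M), ρ g (e m) = e (ρ g m)) :
    contH1 G M ρ →+ contH1 G M ρ :=
  QuotientAddGroup.map _ _ (z1Push e hcomm) (by
    intro f hf
    rw [AddSubgroup.mem_addSubgroupOf] at hf
    obtain ⟨hc, m, hm⟩ := hf
    rw [AddSubgroup.mem_comap, AddSubgroup.mem_addSubgroupOf]
    refine ⟨?_, e m, ?_⟩
    · show Continuous fun g : G => e (f.1 g)
      exact continuous_of_discreteTopology.comp f.2.1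
    · intro g
      show e (f.1 g) = ρ g (e m) - e m
      rw [hm g, map_sub, hcomm])

/-- Restricting an automorphism of `M` to a stable subgroup. -/
def restrictAut (e : AddAut M) (H : AddSubgroup M) (h : ∀ m ∈ H, e m ∈ H)
    (h' : ∀ m ∈ H, e.symm m ∈ H) : AddAut H where
  toFun m := ⟨e ↑m, h ↑m m.2⟩
  invFun m := ⟨e.symm ↑m, h' ↑m m.2⟩
  left_inv m := Subtype.ext (e.symm_apply_apply ↑m)
  right_inv m := Subtype.ext (e.apply_symm_apply ↑m)
  map_add' a b := Subtype.ext (map_add e (↑a) (↑b))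

end ContCohomology

instance (q : Nat.Primes) : Fact (Nat.Prime q) := ⟨q.2⟩

/-- The profinite completion `Ẑ ≅ ∏_ℓ ℤ_ℓ` of `ℤ`. -/
abbrev ZHat : Type := ∀ q : Nat.Primes, ℤ_[q]

section Setup

variable (I : Type) [Group I] [TopologicalSpace I]
variable (M : Type) [AddCommGroup M] [TopologicalSpace M] [DiscreteTopology M]
variable (ρ : (Multiplicative ZHat × I) →* AddAut M)

/-- Restriction of the action to `I`. -/
noncomputable def rhoI : I →* AddAut M := ρ.comp (MonoidHom.inr (Multiplicative ZHat) I)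

lemma rhoI_stable (z : Multiplicative ZHat) (m : M)
    (hm : m ∈ invariantsSubgroup I M (rhoI I M ρ)) :
    ρ (z, 1) m ∈ invariantsSubgroup I M (rhoI I M ρ) := by
  intro i
  show ρ (1, i) (ρ (z, 1) m) = ρ (z, 1) m
  have key : ((1 : Multiplicative ZHat), i) * (z, 1)
      = (z, 1) * ((1 : Multiplicative ZHat), i) := by
    simp [Prod.ext_iff]
  have hmi : ρ ((1 : Multiplicative ZHat), i) m = m := hm i
  rw [← addAut_mul_apply, ← map_mul, key, map_mul, addAut_mul_apply, hmi]

/-- The action of `Ẑ` on the invariants `M^I`. -/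
noncomputable def rhoZ : Multiplicative ZHat →* AddAut (invariantsSubgroup I M (rhoI I M ρ)) where
  toFun z := restrictAut (ρ (z, 1)) _ (fun m hm => rhoI_stable I M ρ z m hm)
    (fun m hm => by
      have : (ρ (z, 1)).symm m = ρ ((z, 1))⁻¹ m := by
        rw [map_inv]; rfl
      rw [this]
      have h2 : ((z, 1) : Multiplicative ZHat × I)⁻¹ = (z⁻¹, 1) := by
        ext <;> simp
      rw [h2]
      exact rhoI_stable I M ρ z⁻¹ m hm)
  map_one' := by
    ext m
    show ρ ((1 : Multiplicative ZHat), (1 : I)) ↑m = ↑m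
    have h1 : ((1 : Multiplicative ZHat), (1 : I)) = (1 : Multiplicative ZHat × I) := rfl
    rw [h1, map_one]
    rfl
  map_mul' z₁ z₂ := by
    ext m
    show ρ (z₁ * z₂, (1 : I)) ↑m = ρ (z₁, 1) (ρ (z₂, 1) ↑m)
    have h1 : ((z₁ * z₂, (1 : I)) : Multiplicative ZHat × I) = (z₁, 1) * (z₂, 1) := by
      simp [Prod.ext_iff]
    rw [h1, map_mul, addAut_mul_apply]

/-- The action of `z ∈ Ẑ = G/I` on `H¹(I, M)` (the conjugation action is trivial since
`G = Ẑ × I` is a product). -/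
noncomputable def zAct (z : Multiplicative ZHat) : contH1 I M (rhoI I M ρ) →+ contH1 I M (rhoI I M ρ) :=
  h1Push (ρ (z, 1)) (fun i m => by
    show ρ (1, i) (ρ (z, 1) m) = ρ (z, 1) (ρ (1, i) m)
    have key : ((1 : Multiplicative ZHat), i) * (z, 1)
        = (z, 1) * ((1 : Multiplicative ZHat), i) := by
      simp [Prod.ext_iff]
    rw [← addAut_mul_apply, ← map_mul, key, map_mul, addAut_mul_apply])

end Setup

@[simp]
theorem addAut_one_apply {A : Type*} [Add A] (m : A) : (1 : AddAut A) m = m :=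
  rfl

section MyMainAux

open Multiplicative

lemma my_rearrange {A : Type*} [AddCommGroup A] {a b c d : A} (h : a + b = c + d) :
    b - c = d - a := by
  have h1 : b = c + d - a := by rw [← h]; abel
  rw [h1]; abel

lemma my_rearrange2 {A : Type*} [AddCommGroup A] {a b c d : A} (h : a - b = c - d) :
    b + c = d + a := by
  have h1 : a = c - d + b := by rw [← h]; abel
  rw [h1]; abel

lemma my_rearrange3 {A : Type*} [AddCommGroup A] {b c b' c' : A} (h : b + c = b' + c')
    (a x : A) : (a + b) + (c + x) = (a + b') + (c' + x) := by
  calc (a + b) + (c + x) = a + (b + c) + x := by abel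
    _ = a + (b' + c') + x := by rw [h]
    _ = (a + b') + (c' + x) := by abel

variable (I : Type) [Group I] [TopologicalSpace I] [DiscreteTopology I]
variable (M : Type) [AddCommGroup M] [TopologicalSpace M] [DiscreteTopology M]
variable (ρ : (Multiplicative ZHat × I) →* AddAut M)

lemma my_comm_zi (z : Multiplicative ZHat) (i : I) (m : M) :
    ρ (z, 1) (ρ (1, i) m) = ρ (1, i) (ρ (z, 1) m) := by
  have key : ((z, 1) : Multiplicative ZHat × I) * (1, i) = (1, i) * (z, 1) := by
    simp [Prod.ext_iff]
  rw [← addAut_mul_apply, ← map_mul, key, map_mul, addAut_mul_apply]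

lemma my_split (z : Multiplicative ZHat) (i : I) (m : M) :
    ρ (z, i) m = ρ (z, 1) (ρ (1, i) m) := by
  have key : ((z, i) : Multiplicative ZHat × I) = (z, 1) * (1, i) := by
    simp [Prod.ext_iff]
  rw [key, map_mul, addAut_mul_apply]

lemma my_rhoZ_coe (z : Multiplicative ZHat) (m : invariantsSubgroup I M (rhoI I M ρ)) :
    ((rhoZ I M ρ z m : invariantsSubgroup I M (rhoI I M ρ)) : M) = ρ (z, 1) (m : M) := rfl

lemma my_mem_N_fix {m : M} (hm : m ∈ invariantsSubgroup I M (rhoI I M ρ)) (i : I) :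
    ρ (1, i) m = m := hm i

/-- Inflation on cocycles. -/
noncomputable def myInfl :
    (contZ1 (Multiplicative ZHat) (invariantsSubgroup I M (rhoI I M ρ)) (rhoZ I M ρ)) →+
      (contZ1 (Multiplicative ZHat × I) M ρ) where
  toFun f := ⟨fun g => (f.1 g.1 : M), by
    refine ⟨(continuous_subtype_val.comp f.2.1).comp continuous_fst, ?_⟩
    rintro ⟨z, i⟩ ⟨w, j⟩
    show ((f.1 (z * w) : _) : M) = (f.1 z : M) + ρ (z, i) ((f.1 w : _) : M)
    rw [f.2.2 z w, AddSubgroup.coe_add, my_rhoZ_coe, my_split I M ρ z i,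
      my_mem_N_fix I M ρ (f.1 w).2 i]⟩
  map_zero' := rfl
  map_add' := fun f f' => rfl

/-- Restriction on cocycles. -/
noncomputable def myRes : (contZ1 (Multiplicative ZHat × I) M ρ) →+ (contZ1 I M (rhoI I M ρ)) where
  toFun f := ⟨fun i => f.1 (1, i), by
    refine ⟨continuous_of_discreteTopology, ?_⟩
    intro i j
    have h := f.2.2 (1, i) (1, j)
    have e : ((1, i) : Multiplicative ZHat × I) * (1, j) = (1, i * j) := by
      simp [Prod.ext_iff]
    rw [e] at h
    exact h⟩
  map_zero' := rfl
  map_add' := fun f f' => rfl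

/-- Inflation on `H¹`. -/
noncomputable def myIota :
    contH1 (Multiplicative ZHat) (invariantsSubgroup I M (rhoI I M ρ)) (rhoZ I M ρ) →+
      contH1 (Multiplicative ZHat × I) M ρ :=
  QuotientAddGroup.map _ _ (myInfl I M ρ) (by
    intro f hf
    rw [AddSubgroup.mem_addSubgroupOf] at hf
    obtain ⟨hc, m, hm⟩ := hf
    rw [AddSubgroup.mem_comap, AddSubgroup.mem_addSubgroupOf]
    refine ⟨(continuous_subtype_val.comp f.2.1).comp continuous_fst, (m : M), ?_⟩
    rintro ⟨z, i⟩
    show ((f.1 z : _) : M) = ρ (z, i) (m : M) - (m : M)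
    rw [hm z, AddSubgroup.coe_sub, my_rhoZ_coe, my_split I M ρ z i,
      my_mem_N_fix I M ρ m.2 i])

/-- Restriction on `H¹`. -/
noncomputable def myPi :
    contH1 (Multiplicative ZHat × I) M ρ →+ contH1 I M (rhoI I M ρ) :=
  QuotientAddGroup.map _ _ (myRes I M ρ) (by
    intro f hf
    rw [AddSubgroup.mem_addSubgroupOf] at hf
    obtain ⟨hc, m, hm⟩ := hf
    rw [AddSubgroup.mem_comap, AddSubgroup.mem_addSubgroupOf]
    exact ⟨continuous_of_discreteTopology, m, fun i => hm (1, i)⟩)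

end MyMainAux


/-! ### Auxiliary machinery -/

section MyGenAux

variable {G : Type*} [Group G] [TopologicalSpace G]
variable {M : Type*} [AddCommGroup M] [TopologicalSpace M] [DiscreteTopology M]
variable {ρ : G →* AddAut M}

lemma my_cont_op {X : Type*} [TopologicalSpace X] {f g : X → M} (hf : Continuous f)
    (hg : Continuous g) (op : M → M → M) : Continuous fun x => op (f x) (g x) := by
  have h1 : Continuous fun x => (f x, g x) := hf.prodMk hg
  exact (continuous_of_discreteTopology (f := fun p : M × M => op p.1 p.2)).comp h1

lemma my_cocycle_one {f : G → M} (hf : f ∈ contZ1 G M ρ) : f 1 = 0 := by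
  have h := hf.2 1 1
  rw [mul_one, map_one] at h
  simpa using h

lemma my_cocycle_inv_zero {f : G → M} (hf : f ∈ contZ1 G M ρ) {g : G} (h : f g = 0) :
    f g⁻¹ = 0 := by
  have h2 := hf.2 g g⁻¹
  rw [mul_inv_cancel, my_cocycle_one hf, h] at h2
  have h3 : ρ g (f g⁻¹) = 0 := by simpa using h2.symm
  have h4 := congrArg (ρ g⁻¹) h3
  rwa [← addAut_mul_apply, ← map_mul, inv_mul_cancel, map_one, addAut_one_apply, map_zero] at h4

lemma my_cocycle_zpow_zero {f : G → M} (hf : f ∈ contZ1 G M ρ) {g : G} (h : f g = 0) :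
    ∀ k : ℤ, f (g ^ k) = 0 := by
  have hnat : ∀ k : ℕ, f (g ^ k) = 0 := by
    intro k
    induction k with
    | zero => simpa using my_cocycle_one hf
    | succ k ih =>
      have h2 := hf.2 (g ^ k) g
      rw [← pow_succ] at h2
      rw [h2, ih, h, map_zero, add_zero]
  intro k
  rcases k with k | k
  · simpa using hnat k
  · rw [zpow_negSucc]
    exact my_cocycle_inv_zero hf (hnat (k + 1))

lemma my_coboundary_mem_Z1 (ρ : G →* AddAut M) (m : M) (hc : Continuous fun g : G => ρ g m) :
    (fun g : G => ρ g m - m) ∈ contZ1 G M ρ := by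
  refine ⟨my_cont_op hc continuous_const Sub.sub, fun g h => ?_⟩
  simp only [map_mul, addAut_mul_apply, map_sub]
  abel

lemma my_aut_fix_pow {P : Type*} [AddCommGroup P] {α : AddAut P} {x : P} (h : α x = x) :
    ∀ k : ℕ, (α ^ k) x = x := by
  intro k
  induction k with
  | zero => simp
  | succ k ih => rw [pow_succ, addAut_mul_apply, h, ih]

lemma my_aut_fix_zpow {P : Type*} [AddCommGroup P] {α : AddAut P} {x : P} (h : α x = x) :
    ∀ k : ℤ, (α ^ k) x = x := by
  have hinv : ∀ {β : AddAut P}, β x = x → β⁻¹ x = x := by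
    intro β hβ
    have h1 : β⁻¹ (β x) = β⁻¹ x := by rw [hβ]
    rw [← addAut_mul_apply, inv_mul_cancel, addAut_one_apply] at h1
    exact h1.symm
  intro k
  rcases k with k | k
  · simpa using my_aut_fix_pow h k
  · rw [zpow_negSucc]
    exact hinv (my_aut_fix_pow h (k + 1))

end MyGenAux

section MyZHatAux

open Multiplicative

lemma my_toZModPow_fiber_isOpen (p : ℕ) [Fact p.Prime] (k : ℕ) (c : ZMod (p ^ k)) :
    IsOpen {y : ℤ_[p] | PadicInt.toZModPow k y = c} := by
  rcases Set.eq_empty_or_nonempty {y : ℤ_[p] | PadicInt.toZModPow k y = c} with h | ⟨y₀, hy₀⟩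
  · rw [h]; exact isOpen_empty
  · have hset : {y : ℤ_[p] | PadicInt.toZModPow k y = c}
        = Metric.ball y₀ ((p : ℝ) ^ (-(k : ℤ) + 1)) := by
      ext y
      simp only [Set.mem_setOf_eq, Metric.mem_ball, dist_eq_norm]
      rw [show (-(k : ℤ) + 1) = (-(k:ℤ)) + 1 by ring,
        ← PadicInt.norm_le_pow_iff_norm_lt_pow_add_one,
        PadicInt.norm_le_pow_iff_mem_span_pow, ← PadicInt.ker_toZModPow, RingHom.mem_ker,
        map_sub, sub_eq_zero, hy₀.out]
    rw [hset]
    exact Metric.isOpen_ball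

lemma my_exists_int_cast_eq (S : Finset Nat.Primes) (k : Nat.Primes → ℕ)
    (t : ∀ q : S, ZMod ((q : Nat.Primes) ^ (k q))) :
    ∃ m : ℤ, ∀ q : S, ((m : ZMod ((q : Nat.Primes) ^ (k q))) = t q) := by
  classical
  have cop : Pairwise (Function.onFun Nat.Coprime fun q : S => ((q : Nat.Primes) : ℕ) ^ (k q)) := by
    intro a b hab
    have hne : ((a : Nat.Primes) : ℕ) ≠ ((b : Nat.Primes) : ℕ) := by
      intro h
      exact hab (Subtype.ext (Subtype.ext h))
    exact Nat.Coprime.pow _ _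
      ((Nat.coprime_primes (a : Nat.Primes).2 (b : Nat.Primes).2).mpr hne)
  let e := ZMod.prodEquivPi (fun q : S => ((q : Nat.Primes) : ℕ) ^ (k q)) cop
  obtain ⟨m, hm⟩ := ZMod.intCast_surjective (n := ∏ q : S, ((q : Nat.Primes) : ℕ) ^ (k q))
    (e.symm t)
  refine ⟨m, fun q => ?_⟩
  have h1 : e ((m : ℤ) : ZMod (∏ q : S, ((q : Nat.Primes) : ℕ) ^ (k q))) = t := by
    rw [hm]; exact e.apply_symm_apply t
  have h2 := congrFun h1 q
  rwa [map_intCast] at h2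

lemma my_denseRange_intCast : DenseRange (Int.cast : ℤ → ZHat) := by
  rw [denseRange_iff_closure_range, ← Set.univ_subset_iff]
  intro x _
  rw [mem_closure_iff]
  intro U hU hxU
  obtain ⟨S, u, hu, hsub⟩ := isOpen_pi_iff.mp hU x hxU
  classical
  have hex : ∀ q : Nat.Primes, ∃ k : ℕ, q ∈ S →
      {y : ℤ_[q] | ‖y - x q‖ ≤ ((q : ℕ) : ℝ) ^ (-(k : ℤ))} ⊆ u q := by
    intro q
    by_cases hq : q ∈ S
    · obtain ⟨ε, hε, hball⟩ := Metric.isOpen_iff.mp (hu q hq).1 (x q) (hu q hq).2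
      have h1 : ((q : ℕ) : ℝ)⁻¹ < 1 := by
        rw [inv_lt_one_iff₀]
        right
        exact_mod_cast (q : Nat.Primes).2.one_lt
      obtain ⟨k, hk⟩ := exists_pow_lt_of_lt_one hε h1
      refine ⟨k, fun _ => ?_⟩
      intro y hy
      apply hball
      rw [Metric.mem_ball, dist_eq_norm]
      calc ‖y - x q‖ ≤ ((q : ℕ) : ℝ) ^ (-(k : ℤ)) := hy
        _ = (((q : ℕ) : ℝ)⁻¹) ^ k := by
            rw [zpow_neg, zpow_natCast, inv_pow]
        _ < ε := hk
    · exact ⟨0, fun h => absurd h hq⟩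
  choose k hk using hex
  obtain ⟨m, hm⟩ := my_exists_int_cast_eq S k (fun q => PadicInt.toZModPow (k q) (x q))
  refine ⟨(m : ZHat), ?_, ⟨m, rfl⟩⟩
  apply hsub
  intro q hq
  apply hk q hq
  simp only [Set.mem_setOf_eq]
  have hmem : ((m : ZHat) q - x q) ∈ Ideal.span {((q : ℕ) : ℤ_[q]) ^ (k q)} := by
    rw [← PadicInt.ker_toZModPow, RingHom.mem_ker, map_sub, sub_eq_zero]
    have h2 : (m : ZHat) q = ((m : ℤ) : ℤ_[q]) := by simp
    rw [h2, map_intCast]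
    exact hm ⟨q, hq⟩
  have h3 := (PadicInt.norm_le_pow_iff_mem_span_pow ((m : ZHat) q - x q) (k q)).mpr hmem
  calc ‖(m : ZHat) q - x q‖ = ‖-(((m : ZHat) q) - x q)‖ := by rw [norm_neg]
    _ = ‖(m : ZHat) q - x q‖ := by rw [neg_sub, ← norm_neg, neg_sub]
    _ ≤ _ := h3

lemma my_exists_zhat_ringHom (n : ℕ) (hn : n ≠ 0) :
    ∃ r : ZHat →+* ZMod n, ∀ s : Set (ZMod n), IsOpen (r ⁻¹' s) := by
  classical
  set ι := {p : ℕ // p ∈ n.primeFactors} with hι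
  have hP : ∀ i : ι, (i : ℕ).Prime := fun i => Nat.prime_of_mem_primeFactors i.2
  let P : ι → Nat.Primes := fun i => ⟨i.1, hP i⟩
  let a : ι → ℕ := fun i => (i : ℕ) ^ (n.factorization i.1)
  have hprod : (∏ i : ι, a i) = n := by
    rw [Finset.prod_coe_sort n.primeFactors (fun p => p ^ n.factorization p)]
    conv_rhs => rw [← Nat.factorization_prod_pow_eq_self hn]
    rw [Finsupp.prod, Nat.support_factorization]
  have cop : Pairwise (Function.onFun Nat.Coprime a) := by
    intro i j hij
    have hne : (i : ℕ) ≠ (j : ℕ) := fun h => hij (Subtype.ext h)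
    exact Nat.Coprime.pow _ _ ((Nat.coprime_primes (hP i) (hP j)).mpr hne)
  let e : ZMod n ≃+* ∀ i : ι, ZMod (a i) :=
    (ZMod.ringEquivCongr hprod.symm).trans (ZMod.prodEquivPi a cop)
  let φ : ZHat →+* ∀ i : ι, ZMod (a i) :=
    Pi.ringHom fun i => (PadicInt.toZModPow (p := (P i : ℕ)) (n.factorization i.1)).comp
      (Pi.evalRingHom _ (P i))
  have hφopen : ∀ v : ∀ i : ι, ZMod (a i), IsOpen (φ ⁻¹' {v}) := by
    intro v
    have h1 : φ ⁻¹' {v} = ⋂ i : ι, (fun x : ZHat => x (P i)) ⁻¹'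
        {y : ℤ_[(P i : ℕ)] | PadicInt.toZModPow (n.factorization i.1) y = v i} := by
      ext x
      simp only [Set.mem_preimage, Set.mem_singleton_iff, Set.mem_iInter, Set.mem_setOf_eq]
      exact ⟨fun h i => congrFun h i, fun h => funext h⟩
    rw [h1]
    exact isOpen_iInter_of_finite fun i =>
      (my_toZModPow_fiber_isOpen _ _ _).preimage (continuous_apply (P i))
  refine ⟨e.symm.toRingHom.comp φ, fun s => ?_⟩
  have h1 : (e.symm.toRingHom.comp φ) ⁻¹' s = φ ⁻¹' (⇑e.symm ⁻¹' s) := rfl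
  rw [h1]
  have h2 : ⇑e.symm ⁻¹' s = ⋃ v ∈ ⇑e.symm ⁻¹' s, {v} := by
    ext w; simp
  rw [h2, Set.preimage_iUnion₂]
  exact isOpen_biUnion fun v _ => hφopen v

variable {P : Type*} [AddCommGroup P] [TopologicalSpace P] [DiscreteTopology P]
variable (φ : Multiplicative ZHat →* AddAut P)

lemma my_ext_zero {f : Multiplicative ZHat → P}
    (hf : f ∈ contZ1 (Multiplicative ZHat) P φ)
    (h1 : f (Multiplicative.ofAdd 1) = 0) : f = 0 := by
  have hall : ∀ z : ZHat, f (Multiplicative.ofAdd z) = 0 := by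
    have hclosed : IsClosed {z : ZHat | f (Multiplicative.ofAdd z) = 0} :=
      IsClosed.preimage (hf.1.comp continuous_ofAdd) (isClosed_discrete {0})
    have hsub : Set.range (Int.cast : ℤ → ZHat) ⊆
        {z : ZHat | f (Multiplicative.ofAdd z) = 0} := by
      rintro _ ⟨kk, rfl⟩
      have e1 : ((kk : ZHat)) = kk • (1 : ZHat) := by rw [zsmul_eq_mul, mul_one]
      rw [Set.mem_setOf_eq, e1, ofAdd_zsmul]
      exact my_cocycle_zpow_zero hf h1 kk
    intro z
    have h2 := hclosed.closure_subset_iff.mpr hsub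
    rw [my_denseRange_intCast.closure_eq] at h2
    exact h2 (Set.mem_univ z)
  funext z
  simpa using hall z.toAdd

lemma my_fix_all (hφ : ∀ m : P, Continuous fun z : ZHat => φ (Multiplicative.ofAdd z) m)
    {x : P} (h : φ (Multiplicative.ofAdd 1) x = x) :
    ∀ z : Multiplicative ZHat, φ z x = x := by
  have key : (fun z : ZHat => φ (Multiplicative.ofAdd z) x) = fun _ => x := by
    refine Continuous.ext_on my_denseRange_intCast (hφ x) continuous_const ?_
    rintro _ ⟨kk, rfl⟩
    show φ (Multiplicative.ofAdd ((kk : ZHat))) x = x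
    have e1 : ((kk : ZHat)) = kk • (1 : ZHat) := by rw [zsmul_eq_mul, mul_one]
    rw [e1, ofAdd_zsmul, map_zpow]
    exact my_aut_fix_zpow h kk
  intro z
  have := congrFun key z.toAdd
  simpa using this

lemma my_zhat_action_struct [Finite P]
    (hφ : ∀ m : P, Continuous fun z : ZHat => φ (Multiplicative.ofAdd z) m) :
    ∃ (n : ℕ) (r : ZHat →+* ZMod n), 1 < n ∧ (∀ s : Set (ZMod n), IsOpen (r ⁻¹' s)) ∧
      (∀ (z : ZHat) (x : P), φ (Multiplicative.ofAdd z) x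
          = ((φ (Multiplicative.ofAdd 1)) ^ ((r z).val)) x) ∧
      (∀ x : P, ∑ j ∈ Finset.range n, ((φ (Multiplicative.ofAdd 1)) ^ j) x = 0) := by
  classical
  haveI : Finite (AddAut P) := Finite.of_injective (fun e : AddAut P => (e : P → P))
    DFunLike.coe_injective
  set α := φ (Multiplicative.ofAdd (1 : ZHat)) with hα
  set o := orderOf α with ho
  set n := o * (2 * Nat.card P) with hn
  have hopos : 0 < o := orderOf_pos α
  have hcard : 0 < Nat.card P := Nat.card_pos
  have hn1 : 1 < n := by
    rw [hn]
    calc 1 = 1 * 1 := by norm_num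
    _ < o * (2 * Nat.card P) := by
        apply Nat.mul_lt_mul_of_le_of_lt hopos
        · omega
        · exact hopos
  have hnpos : 0 < n := by omega
  haveI : NeZero n := ⟨hnpos.ne'⟩
  obtain ⟨r, hr⟩ := my_exists_zhat_ringHom n hnpos.ne'
  have hαn : α ^ n = 1 := by rw [hn, pow_mul, pow_orderOf_eq_one, one_pow]
  refine ⟨n, r, hn1, hr, ?_, ?_⟩
  · intro z x
    have cont1 : Continuous fun z : ZHat => φ (Multiplicative.ofAdd z) x := hφ x
    have cont2 : Continuous fun z : ZHat => (α ^ ((r z).val)) x := by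
      rw [continuous_def]
      intro s _
      have h1 : (fun z : ZHat => (α ^ ((r z).val)) x) ⁻¹' s
          = r ⁻¹' {a : ZMod n | (α ^ a.val) x ∈ s} := rfl
      rw [h1]; exact hr _
    have heq := Continuous.ext_on my_denseRange_intCast cont1 cont2 ?_
    · exact congrFun heq z
    · rintro _ ⟨kk, rfl⟩
      have e1 : ((kk : ZHat)) = kk • (1 : ZHat) := by rw [zsmul_eq_mul, mul_one]
      have h2 : φ (Multiplicative.ofAdd ((kk : ZHat))) = α ^ kk := by
        rw [e1, ofAdd_zsmul, map_zpow]
      have h3 : (r ((kk : ZHat))) = ((kk : ZMod n)) := map_intCast r kk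
      have h4 : α ^ (((kk : ZMod n)).val) = α ^ kk := by
        have hv : ((((kk : ZMod n)).val : ℤ)) = kk % n := ZMod.val_intCast kk
        have h5 : α ^ kk = α ^ ((n : ℤ) * (kk / n) + kk % n) := by
          rw [Int.mul_ediv_add_emod]
        rw [h5, zpow_add, zpow_mul, zpow_natCast, hαn, one_zpow, one_mul, ← hv, zpow_natCast]
      show φ (Multiplicative.ofAdd ((kk : ZHat))) x = (α ^ ((r ((kk : ZHat))).val)) x
      rw [h2, h3, h4]
  · intro x
    have key : ∀ t : ℕ, ∑ j ∈ Finset.range (o * t), (α ^ j) x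
        = t • (∑ j ∈ Finset.range o, (α ^ j) x) := by
      intro t
      induction t with
      | zero => simp
      | succ t ih =>
        rw [Nat.mul_succ, Finset.sum_range_add, ih, succ_nsmul]
        congr 1
        refine Finset.sum_congr rfl fun j _ => ?_
        rw [pow_add, pow_mul, pow_orderOf_eq_one, one_pow, one_mul]
    rw [hn, key, mul_nsmul', card_nsmul_eq_zero', smul_zero]

def myS (α : AddAut P) (m₀ : P) (k : ℕ) : P := ∑ j ∈ Finset.range k, (α ^ j) m₀

lemma myS_add (α : AddAut P) (m₀ : P) (k l : ℕ) :
    myS α m₀ (k + l) = myS α m₀ k + (α ^ k) (myS α m₀ l) := by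
  unfold myS
  rw [Finset.sum_range_add, map_sum]
  congr 1
  refine Finset.sum_congr rfl fun j _ => ?_
  rw [pow_add, addAut_mul_apply]

lemma myS_comm (α : AddAut P) (m₀ : P) (β : AddAut P) (x : P)
    (hcomm : ∀ y, β (α y) = α (β y)) (hβ : β m₀ - m₀ = α x - x) (k : ℕ) :
    β (myS α m₀ k) - myS α m₀ k = (α ^ k) x - x := by
  have hcommpow : ∀ (j : ℕ) (y : P), β ((α ^ j) y) = (α ^ j) (β y) := by
    intro j
    induction j with
    | zero => intro y; simp
    | succ j ihj => intro y; rw [pow_succ, addAut_mul_apply, addAut_mul_apply, ihj, hcomm]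
  induction k with
  | zero => simp [myS]
  | succ k ih =>
    have hsucc : myS α m₀ (k + 1) = myS α m₀ k + (α ^ k) m₀ := by
      unfold myS; rw [Finset.sum_range_succ]
    rw [hsucc, map_add]
    have h1 : β ((α ^ k) m₀) - (α ^ k) m₀ = (α ^ k) (α x) - (α ^ k) x := by
      rw [hcommpow, ← map_sub, hβ, map_sub]
    have h2 : (α ^ (k + 1)) x = (α ^ k) (α x) := by
      rw [pow_succ, addAut_mul_apply]
    calc β (myS α m₀ k) + β ((α ^ k) m₀) - (myS α m₀ k + (α ^ k) m₀)
        = (β (myS α m₀ k) - myS α m₀ k) + (β ((α ^ k) m₀) - (α ^ k) m₀) := by abel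
      _ = ((α ^ k) x - x) + ((α ^ k) (α x) - (α ^ k) x) := by rw [ih, h1]
      _ = (α ^ (k + 1)) x - x := by rw [h2]; abel

lemma my_exists_cocycle [Finite P]
    (hφ : ∀ m : P, Continuous fun z : ZHat => φ (Multiplicative.ofAdd z) m) (m₀ : P) :
    ∃ F : Multiplicative ZHat → P, F ∈ contZ1 (Multiplicative ZHat) P φ ∧
      F (Multiplicative.ofAdd 1) = m₀ ∧
      ∀ (β : AddAut P) (x : P),
        (∀ y, β ((φ (Multiplicative.ofAdd 1)) y) = (φ (Multiplicative.ofAdd 1)) (β y)) →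
        β m₀ - m₀ = (φ (Multiplicative.ofAdd 1)) x - x →
        ∀ z : Multiplicative ZHat, β (F z) - F z = φ z x - x := by
  classical
  obtain ⟨n, r, hn1, hr, key, hsum⟩ := my_zhat_action_struct φ hφ
  haveI : NeZero n := ⟨by omega⟩
  haveI : Fact (1 < n) := ⟨hn1⟩
  set α := φ (Multiplicative.ofAdd (1 : ZHat)) with hα
  have Sn : myS α m₀ n = 0 := hsum m₀
  have Saddn : ∀ k, myS α m₀ (k + n) = myS α m₀ k := by
    intro k
    rw [myS_add, Sn, map_zero, add_zero]
  have Smul : ∀ q k, myS α m₀ (k + n * q) = myS α m₀ k := by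
    intro q
    induction q with
    | zero => intro k; simp
    | succ q ih =>
      intro k
      rw [Nat.mul_succ, ← add_assoc, Saddn, ih]
  have Smod : ∀ k, myS α m₀ (k % n) = myS α m₀ k := by
    intro k
    conv_rhs => rw [← Nat.mod_add_div k n]
    rw [Smul]
  refine ⟨fun z => myS α m₀ ((r z.toAdd).val), ⟨?_, ?_⟩, ?_, ?_⟩
  · -- continuity
    rw [continuous_def]
    intro s _
    have h1 : (fun z : Multiplicative ZHat => myS α m₀ ((r z.toAdd).val)) ⁻¹' s
        = (fun z : Multiplicative ZHat => z.toAdd) ⁻¹'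
          (r ⁻¹' {a : ZMod n | myS α m₀ a.val ∈ s}) := rfl
    rw [h1]
    exact (hr _).preimage continuous_toAdd
  · -- cocycle
    intro z w
    show myS α m₀ ((r (z * w).toAdd).val) = myS α m₀ ((r z.toAdd).val)
      + φ z (myS α m₀ ((r w.toAdd).val))
    have h1 : (z * w).toAdd = z.toAdd + w.toAdd := rfl
    have h2 : φ z (myS α m₀ ((r w.toAdd).val))
        = (α ^ ((r z.toAdd).val)) (myS α m₀ ((r w.toAdd).val)) := by
      conv_lhs => rw [← ofAdd_toAdd z]
      exact key z.toAdd _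
    rw [h1, map_add, ZMod.val_add, Smod, myS_add, h2]
  · -- value at generator
    show myS α m₀ ((r (Multiplicative.ofAdd (1:ZHat)).toAdd).val) = m₀
    have h1 : (Multiplicative.ofAdd (1:ZHat)).toAdd = (1 : ZHat) := rfl
    rw [h1, map_one, ZMod.val_one]
    unfold myS
    simp
  · -- relation
    intro β x hcomm hβ z
    have h1 := myS_comm α m₀ β x hcomm hβ ((r z.toAdd).val)
    rw [h1]
    have h2 : φ z x = (α ^ ((r z.toAdd).val)) x := by
      conv_lhs => rw [← ofAdd_toAdd z]
      exact key z.toAdd x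
    rw [h2]


end MyZHatAux

/-- **Inflation–restriction.**  Let `G ≅ Ẑ × I` with `I` finite cyclic act continuously on a
finite abelian group `M` (with the discrete topology).  Then there is a short exact sequence
`1 → H¹(Ẑ, M^I) → H¹(G, M) → H¹(I, M)^Ẑ → 1` of continuous cohomology groups, and in
particular `|H¹(G, M)| = |M^G| · |H¹(I, M)^G|`, where `|H¹(Ẑ, M^I)| = |M^G|`. -/
theorem inflation_restriction_ZHat
    (I : Type) [Group I] [Finite I] [IsCyclic I] [TopologicalSpace I] [DiscreteTopology I]
    (M : Type) [AddCommGroup M] [Finite M] [TopologicalSpace M] [DiscreteTopology M]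
    (ρ : (Multiplicative ZHat × I) →* AddAut M)
    (hcont : Continuous fun x : (Multiplicative ZHat × I) × M => ρ x.1 x.2) :
    (∃ (ι : contH1 (Multiplicative ZHat) (invariantsSubgroup I M (rhoI I M ρ)) (rhoZ I M ρ) →+
          contH1 (Multiplicative ZHat × I) M ρ)
       (π : contH1 (Multiplicative ZHat × I) M ρ →+ contH1 I M (rhoI I M ρ)),
      Function.Injective ι ∧
      (∀ c, c ∈ Set.range ι ↔ π c = 0) ∧
      Set.range π = {c | ∀ z : Multiplicative ZHat, zAct I M ρ z c = c}) ∧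
    Nat.card (contH1 (Multiplicative ZHat) (invariantsSubgroup I M (rhoI I M ρ)) (rhoZ I M ρ)) =
      Nat.card (invariantsSubgroup (Multiplicative ZHat × I) M ρ) ∧
    Nat.card (contH1 (Multiplicative ZHat × I) M ρ) =
      Nat.card (invariantsSubgroup (Multiplicative ZHat × I) M ρ) *
        Nat.card {c : contH1 I M (rhoI I M ρ) // ∀ z : Multiplicative ZHat,
          zAct I M ρ z c = c} := by
  classical
  haveI : Finite ↥(invariantsSubgroup I M (rhoI I M ρ)) := Subtype.finite
  have hc1 : ∀ m : M, Continuous fun g : Multiplicative ZHat × I => ρ g m := fun m =>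
    hcont.comp (continuous_id.prodMk continuous_const)
  have hφM : ∀ m : M, Continuous fun z : ZHat =>
      ρ.comp (MonoidHom.inl (Multiplicative ZHat) I) (Multiplicative.ofAdd z) m := fun m =>
    hcont.comp ((continuous_ofAdd.prodMk continuous_const).prodMk continuous_const)
  have hφN : ∀ m : invariantsSubgroup I M (rhoI I M ρ),
      Continuous fun z : ZHat => rhoZ I M ρ (Multiplicative.ofAdd z) m := fun m =>
    Continuous.subtype_mk (hφM (m : M)) _
  have hco : ∀ z : Multiplicative ZHat, ∀ (i : I) (m : M),
      rhoI I M ρ i (ρ (z, 1) m) = ρ (z, 1) (rhoI I M ρ i m) :=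
    fun z i m => (my_comm_zi I M ρ z i m).symm
  have hzmk : ∀ (z : Multiplicative ZHat) (x : contZ1 I M (rhoI I M ρ)),
      zAct I M ρ z (QuotientAddGroup.mk x)
        = QuotientAddGroup.mk (z1Push (ρ (z, 1)) (hco z) x) := fun z x => rfl
  have hπmk : ∀ x : contZ1 (Multiplicative ZHat × I) M ρ,
      myPi I M ρ (QuotientAddGroup.mk x) = QuotientAddGroup.mk (myRes I M ρ x) := fun x => rfl
  have hιmk : ∀ x, myIota I M ρ (QuotientAddGroup.mk x)
      = QuotientAddGroup.mk (myInfl I M ρ x) := fun x => rfl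
  -- injectivity of inflation
  have hinj : Function.Injective ⇑(myIota I M ρ) := by
    rw [injective_iff_map_eq_zero]
    intro c hc
    obtain ⟨f, rfl⟩ := QuotientAddGroup.mk_surjective c
    rw [hιmk] at hc
    have hmem := (QuotientAddGroup.eq_zero_iff _).mp hc
    rw [AddSubgroup.mem_addSubgroupOf] at hmem
    obtain ⟨hcb, m, hm⟩ := hmem
    have hmN : m ∈ invariantsSubgroup I M (rhoI I M ρ) := by
      intro i
      have h1 := hm ((1 : Multiplicative ZHat), i)
      have h2 : (myInfl I M ρ f).1 ((1 : Multiplicative ZHat), i) = 0 := by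
        show ((f.1 (1 : Multiplicative ZHat) : _) : M) = 0
        rw [my_cocycle_one f.2, AddSubgroup.coe_zero]
      rw [h2] at h1
      have h3 := h1.symm
      rwa [sub_eq_zero] at h3
    refine (QuotientAddGroup.eq_zero_iff _).mpr ?_
    rw [AddSubgroup.mem_addSubgroupOf]
    refine ⟨f.2.1, ⟨m, hmN⟩, ?_⟩
    intro z
    apply Subtype.ext
    show ((f.1 z : _) : M) = ((rhoZ I M ρ z ⟨m, hmN⟩ - ⟨m, hmN⟩ : _) : M)
    rw [AddSubgroup.coe_sub, my_rhoZ_coe]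
    exact hm (z, 1)
  -- exactness
  have hexact : ∀ c, c ∈ Set.range ⇑(myIota I M ρ) ↔ myPi I M ρ c = 0 := by
    intro c
    constructor
    · rintro ⟨d, rfl⟩
      obtain ⟨f, rfl⟩ := QuotientAddGroup.mk_surjective d
      rw [hιmk, hπmk]
      refine (QuotientAddGroup.eq_zero_iff _).mpr ?_
      rw [AddSubgroup.mem_addSubgroupOf]
      refine ⟨continuous_of_discreteTopology, 0, ?_⟩
      intro i
      show ((f.1 (1 : Multiplicative ZHat) : _) : M) = rhoI I M ρ i 0 - 0
      rw [my_cocycle_one f.2, AddSubgroup.coe_zero, map_zero, sub_zero]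
    · intro hc
      obtain ⟨f, rfl⟩ := QuotientAddGroup.mk_surjective c
      rw [hπmk] at hc
      have hc' := (QuotientAddGroup.eq_zero_iff _).mp hc
      rw [AddSubgroup.mem_addSubgroupOf] at hc'
      obtain ⟨hcb, m, hm⟩ := hc'
      have hcobZ : (fun g : Multiplicative ZHat × I => ρ g m - m)
          ∈ contZ1 (Multiplicative ZHat × I) M ρ := my_coboundary_mem_Z1 ρ m (hc1 m)
      set cob : contZ1 (Multiplicative ZHat × I) M ρ := ⟨_, hcobZ⟩ with hcob
      set f' : contZ1 (Multiplicative ZHat × I) M ρ := f - cob with hf'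
      have hf'val : ∀ g, (f' : (Multiplicative ZHat × I) → M) g = f.1 g - (ρ g m - m) :=
        fun g => rfl
      have hf'res : ∀ i : I, (f' : (Multiplicative ZHat × I) → M) (1, i) = 0 := by
        intro i
        have hmi : f.1 ((1 : Multiplicative ZHat), i) = ρ (1, i) m - m := hm i
        rw [hf'val, hmi]
        exact sub_self _
      have hf'N : ∀ z : Multiplicative ZHat,
          (f' : (Multiplicative ZHat × I) → M) (z, 1)
            ∈ invariantsSubgroup I M (rhoI I M ρ) := by
        intro z i
        have e3 : ((1, i) : Multiplicative ZHat × I) * (z, 1) = (z, 1) * (1, i) := by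
          simp [Prod.ext_iff]
        have e1 := f'.2.2 (z, 1) (1, i)
        have e2 := f'.2.2 (1, i) (z, 1)
        rw [e3, e1, hf'res i, map_zero, add_zero, zero_add] at e2
        exact e2.symm
      set h : Multiplicative ZHat → invariantsSubgroup I M (rhoI I M ρ) :=
        fun z => ⟨(f' : (Multiplicative ZHat × I) → M) (z, 1), hf'N z⟩ with hh
      have hhZ : h ∈ contZ1 (Multiplicative ZHat)
          (invariantsSubgroup I M (rhoI I M ρ)) (rhoZ I M ρ) := by
        refine ⟨Continuous.subtype_mk
          (f'.2.1.comp (continuous_id.prodMk continuous_const)) _, ?_⟩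
        intro z w
        apply Subtype.ext
        show (f' : (Multiplicative ZHat × I) → M) (z * w, 1)
          = ((h z + rhoZ I M ρ z (h w) : _) : M)
        rw [AddSubgroup.coe_add, my_rhoZ_coe]
        have e1 := f'.2.2 (z, 1) (w, 1)
        have e2 : ((z, 1) : Multiplicative ZHat × I) * (w, 1) = (z * w, 1) := by
          simp [Prod.ext_iff]
        rw [e2] at e1
        exact e1
      refine ⟨QuotientAddGroup.mk ⟨h, hhZ⟩, ?_⟩
      rw [hιmk]
      have hinfl : myInfl I M ρ ⟨h, hhZ⟩ = f' := by
        apply Subtype.ext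
        funext g
        show (f' : (Multiplicative ZHat × I) → M) (g.1, 1)
          = (f' : (Multiplicative ZHat × I) → M) g
        rcases g with ⟨z, i⟩
        have e1 := f'.2.2 (z, 1) (1, i)
        have e2 : ((z, 1) : Multiplicative ZHat × I) * (1, i) = (z, i) := by
          simp [Prod.ext_iff]
        rw [e2, hf'res i, map_zero, add_zero] at e1
        exact e1.symm
      rw [hinfl]
      refine (QuotientAddGroup.eq_iff_sub_mem).mpr ?_
      have hsubeq : f' - f = -cob := by rw [hf']; abel
      rw [hsubeq]
      apply AddSubgroup.neg_mem
      rw [AddSubgroup.mem_addSubgroupOf]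
      exact ⟨hcobZ.1, m, fun g => rfl⟩
  -- range of restriction
  have hrange : Set.range ⇑(myPi I M ρ)
      = {c | ∀ z : Multiplicative ZHat, zAct I M ρ z c = c} := by
    apply Set.eq_of_subset_of_subset
    · rintro _ ⟨d, rfl⟩
      obtain ⟨f, rfl⟩ := QuotientAddGroup.mk_surjective d
      intro z
      rw [hπmk, hzmk]
      refine (QuotientAddGroup.eq_iff_sub_mem).mpr ?_
      rw [AddSubgroup.mem_addSubgroupOf]
      refine ⟨continuous_of_discreteTopology, f.1 (z, 1), ?_⟩
      intro i
      show ρ (z, 1) (f.1 (1, i)) - f.1 (1, i) = rhoI I M ρ i (f.1 (z, 1)) - f.1 (z, 1)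
      have e3 : ((z, 1) : Multiplicative ZHat × I) * (1, i) = (1, i) * (z, 1) := by
        simp [Prod.ext_iff]
      have e1 := f.2.2 (z, 1) (1, i)
      have e2 := f.2.2 (1, i) (z, 1)
      rw [e3, e2] at e1
      exact (my_rearrange e1).symm
    · intro c hc
      rw [Set.mem_setOf_eq] at hc
      obtain ⟨cc, rfl⟩ := QuotientAddGroup.mk_surjective c
      have h1 := hc (Multiplicative.ofAdd (1 : ZHat))
      rw [hzmk] at h1
      have hsub := (QuotientAddGroup.eq_iff_sub_mem).mp h1
      rw [AddSubgroup.mem_addSubgroupOf] at hsub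
      obtain ⟨hcbb, m₀, hm₀'⟩ := hsub
      have hm₀ : ∀ i : I, ρ (Multiplicative.ofAdd (1 : ZHat), 1) (cc.1 i) - cc.1 i
          = ρ (1, i) m₀ - m₀ := fun i => hm₀' i
      obtain ⟨F, hFZ, hF1, hrel⟩ := my_exists_cocycle
        (ρ.comp (MonoidHom.inl (Multiplicative ZHat) I)) hφM m₀
      have hstar : ∀ (i : I) (w : Multiplicative ZHat),
          ρ (1, i) (F w) - F w = ρ (w, 1) (cc.1 i) - cc.1 i := by
        intro i w
        exact hrel (rhoI I M ρ i) (cc.1 i)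
          (fun y => (my_comm_zi I M ρ (Multiplicative.ofAdd (1 : ZHat)) i y).symm)
          ((hm₀ i).symm) w
      set ff : (Multiplicative ZHat × I) → M :=
        fun g => F g.1 + ρ (g.1, 1) (cc.1 g.2) with hffdef
      have hffZ : ff ∈ contZ1 (Multiplicative ZHat × I) M ρ := by
        constructor
        · exact my_cont_op (hFZ.1.comp continuous_fst)
            (hcont.comp ((continuous_fst.prodMk continuous_const).prodMk
              (cc.2.1.comp continuous_snd))) (· + ·)
        · rintro ⟨z, i⟩ ⟨w, j⟩
          show F (z * w) + ρ (z * w, 1) (cc.1 (i * j))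
              = (F z + ρ (z, 1) (cc.1 i)) + ρ (z, i) (F w + ρ (w, 1) (cc.1 j))
          have h1 : F (z * w) = F z + ρ (z, 1) (F w) := hFZ.2 z w
          have h2 : cc.1 (i * j) = cc.1 i + ρ (1, i) (cc.1 j) := cc.2.2 i j
          have h3 : ∀ m : M, ρ (z * w, (1 : I)) m = ρ (z, 1) (ρ (w, 1) m) := by
            intro m
            have e2 : ((z * w, 1) : Multiplicative ZHat × I) = (z, 1) * (w, 1) := by
              simp [Prod.ext_iff]
            rw [e2, map_mul, addAut_mul_apply]
          have h5 : F w + ρ (w, 1) (cc.1 i) = cc.1 i + ρ (1, i) (F w) :=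
            my_rearrange2 (hstar i w)
          rw [h1, h2, map_add, map_add, h3, h3, my_split I M ρ z i, my_split I M ρ z i,
            ← my_comm_zi I M ρ w i (cc.1 j)]
          refine my_rearrange3 ?_ (F z) _
          rw [← map_add, ← map_add, h5]
      refine ⟨QuotientAddGroup.mk ⟨ff, hffZ⟩, ?_⟩
      rw [hπmk]
      have hres : myRes I M ρ ⟨ff, hffZ⟩ = cc := by
        apply Subtype.ext
        funext i
        show F 1 + ρ ((1 : Multiplicative ZHat), (1 : I)) (cc.1 i) = cc.1 i
        have hF1' : F 1 = 0 := my_cocycle_one hFZ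
        have hone : ρ ((1 : Multiplicative ZHat), (1 : I)) = 1 := map_one ρ
        rw [hF1', hone, addAut_one_apply, zero_add]
      rw [hres]
  -- evaluation of `Ẑ`-cocycles at the generator
  set ev : (contZ1 (Multiplicative ZHat) (invariantsSubgroup I M (rhoI I M ρ)) (rhoZ I M ρ))
      →+ (invariantsSubgroup I M (rhoI I M ρ)) :=
    AddMonoidHom.mk' (fun f => f.1 (Multiplicative.ofAdd (1 : ZHat))) (fun a b => rfl)
    with hev
  have hevinj : Function.Injective ⇑ev := by
    rw [injective_iff_map_eq_zero]
    intro f hf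
    apply Subtype.ext
    exact my_ext_zero (rhoZ I M ρ) f.2 hf
  have hevsurj : Function.Surjective ⇑ev := by
    intro m
    obtain ⟨F, hFZ, hF1, -⟩ := my_exists_cocycle (rhoZ I M ρ) hφN m
    exact ⟨⟨F, hFZ⟩, hF1⟩
  set dmap : (invariantsSubgroup I M (rhoI I M ρ)) →+ (invariantsSubgroup I M (rhoI I M ρ)) :=
    AddMonoidHom.mk' (fun y => rhoZ I M ρ (Multiplicative.ofAdd (1 : ZHat)) y - y)
      (fun a b => by
        show rhoZ I M ρ (Multiplicative.ofAdd (1 : ZHat)) (a + b) - (a + b)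
          = (rhoZ I M ρ (Multiplicative.ofAdd (1 : ZHat)) a - a)
            + (rhoZ I M ρ (Multiplicative.ofAdd (1 : ZHat)) b - b)
        rw [map_add]
        abel) with hdmap
  have hBequiv : Nat.card
      ((contB1 (Multiplicative ZHat) (invariantsSubgroup I M (rhoI I M ρ))
        (rhoZ I M ρ)).addSubgroupOf
          (contZ1 (Multiplicative ZHat) (invariantsSubgroup I M (rhoI I M ρ)) (rhoZ I M ρ)))
      = Nat.card dmap.range := by
    refine Nat.card_congr (Equiv.ofBijective (fun b => ⟨ev b.1, ?_⟩) ⟨?_, ?_⟩)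
    · have hb := b.2
      rw [AddSubgroup.mem_addSubgroupOf] at hb
      obtain ⟨hcb, m, hm⟩ := hb
      rw [AddMonoidHom.mem_range]
      refine ⟨m, ?_⟩
      show rhoZ I M ρ (Multiplicative.ofAdd (1 : ZHat)) m - m
        = ev b.1
      exact (hm (Multiplicative.ofAdd (1 : ZHat))).symm
    · intro a b hab
      have h1 := congrArg Subtype.val hab
      exact Subtype.ext (hevinj h1)
    · rintro ⟨y, hy⟩
      rw [AddMonoidHom.mem_range] at hy
      obtain ⟨m, hm⟩ := hy
      have hcobm : (fun z : Multiplicative ZHat => rhoZ I M ρ z m - m)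
          ∈ contZ1 (Multiplicative ZHat) (invariantsSubgroup I M (rhoI I M ρ)) (rhoZ I M ρ) :=
        my_coboundary_mem_Z1 (rhoZ I M ρ) m ((hφN m).comp continuous_toAdd)
      refine ⟨⟨⟨_, hcobm⟩, ?_⟩, ?_⟩
      · rw [AddSubgroup.mem_addSubgroupOf]
        exact ⟨hcobm.1, m, fun z => rfl⟩
      · apply Subtype.ext
        exact hm
  have hker_inv : Nat.card dmap.ker
      = Nat.card (invariantsSubgroup (Multiplicative ZHat × I) M ρ) := by
    refine Nat.card_congr (Equiv.ofBijective (fun y => ⟨((y.1 : _) : M), ?_⟩) ⟨?_, ?_⟩)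
    · rintro ⟨z, i⟩
      have hy := y.2
      rw [AddMonoidHom.mem_ker] at hy
      have h2 : rhoZ I M ρ (Multiplicative.ofAdd (1 : ZHat)) y.1 - y.1 = 0 := hy
      rw [sub_eq_zero] at h2
      have hall := my_fix_all (rhoZ I M ρ) hφN h2 z
      have hcoe : ρ (z, 1) ((y.1 : _) : M) = ((y.1 : _) : M) := by
        have h3 := congrArg Subtype.val hall
        rwa [my_rhoZ_coe] at h3
      show ρ (z, i) ((y.1 : _) : M) = ((y.1 : _) : M)
      rw [my_split I M ρ z i, my_mem_N_fix I M ρ y.1.2 i, hcoe]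
    · intro a b hab
      have h1 := congrArg Subtype.val hab
      exact Subtype.ext (Subtype.ext h1)
    · rintro ⟨w, hw⟩
      have hwN : w ∈ invariantsSubgroup I M (rhoI I M ρ) := fun i =>
        hw ((1 : Multiplicative ZHat), i)
      refine ⟨⟨⟨w, hwN⟩, ?_⟩, rfl⟩
      rw [AddMonoidHom.mem_ker]
      show rhoZ I M ρ (Multiplicative.ofAdd (1 : ZHat)) ⟨w, hwN⟩ - ⟨w, hwN⟩ = 0
      apply Subtype.ext
      show ρ (Multiplicative.ofAdd (1 : ZHat), 1) w - w = (0 : M)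
      rw [hw (Multiplicative.ofAdd (1 : ZHat), 1), sub_self]
  have hc2 : Nat.card (contH1 (Multiplicative ZHat)
        (invariantsSubgroup I M (rhoI I M ρ)) (rhoZ I M ρ))
      = Nat.card (invariantsSubgroup (Multiplicative ZHat × I) M ρ) := by
    have q1 : Nat.card (contZ1 (Multiplicative ZHat)
          (invariantsSubgroup I M (rhoI I M ρ)) (rhoZ I M ρ))
        = Nat.card (contH1 (Multiplicative ZHat)
            (invariantsSubgroup I M (rhoI I M ρ)) (rhoZ I M ρ))
          * Nat.card ((contB1 (Multiplicative ZHat) (invariantsSubgroup I M (rhoI I M ρ))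
            (rhoZ I M ρ)).addSubgroupOf
              (contZ1 (Multiplicative ZHat) (invariantsSubgroup I M (rhoI I M ρ))
                (rhoZ I M ρ))) :=
      AddSubgroup.card_eq_card_quotient_mul_card_addSubgroup _
    have q2 : Nat.card (contZ1 (Multiplicative ZHat)
          (invariantsSubgroup I M (rhoI I M ρ)) (rhoZ I M ρ))
        = Nat.card (invariantsSubgroup I M (rhoI I M ρ)) :=
      Nat.card_congr (Equiv.ofBijective ⇑ev ⟨hevinj, hevsurj⟩)
    have q3 : Nat.card (invariantsSubgroup I M (rhoI I M ρ))
        = Nat.card ((invariantsSubgroup I M (rhoI I M ρ)) ⧸ dmap.ker) * Nat.card dmap.ker :=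
      AddSubgroup.card_eq_card_quotient_mul_card_addSubgroup _
    have q4 : Nat.card ((invariantsSubgroup I M (rhoI I M ρ)) ⧸ dmap.ker)
        = Nat.card dmap.range :=
      Nat.card_congr (QuotientAddGroup.quotientKerEquivRange dmap).toEquiv
    haveI : Finite (dmap.range) := Subtype.finite
    have hpos : 0 < Nat.card dmap.range := Nat.card_pos
    have e6 : Nat.card (invariantsSubgroup I M (rhoI I M ρ))
        = Nat.card (contH1 (Multiplicative ZHat)
            (invariantsSubgroup I M (rhoI I M ρ)) (rhoZ I M ρ)) * Nat.card dmap.range := by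
      rw [← hBequiv, ← q1, q2]
    have e7 : Nat.card (invariantsSubgroup I M (rhoI I M ρ))
        = Nat.card dmap.ker * Nat.card dmap.range := by
      rw [q3, q4, mul_comm]
    have e8 := e6.symm.trans e7
    have e9 := Nat.eq_of_mul_eq_mul_right hpos e8
    rw [e9, hker_inv]
  refine ⟨⟨myIota I M ρ, myPi I M ρ, hinj, hexact, hrange⟩, hc2, ?_⟩
  have d1 : Nat.card (contH1 (Multiplicative ZHat × I) M ρ)
      = Nat.card ((contH1 (Multiplicative ZHat × I) M ρ) ⧸ (myPi I M ρ).ker)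
        * Nat.card (myPi I M ρ).ker :=
    AddSubgroup.card_eq_card_quotient_mul_card_addSubgroup _
  have d2 : Nat.card ((contH1 (Multiplicative ZHat × I) M ρ) ⧸ (myPi I M ρ).ker)
      = Nat.card (myPi I M ρ).range :=
    Nat.card_congr (QuotientAddGroup.quotientKerEquivRange (myPi I M ρ)).toEquiv
  have d3 : Nat.card (myPi I M ρ).range
      = Nat.card {c : contH1 I M (rhoI I M ρ) // ∀ z : Multiplicative ZHat,
        zAct I M ρ z c = c} := by
    refine Nat.card_congr (Equiv.subtypeEquivRight ?_)
    intro c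
    rw [AddMonoidHom.mem_range]
    exact Set.ext_iff.mp hrange c
  have d4 : Nat.card (myPi I M ρ).ker
      = Nat.card (contH1 (Multiplicative ZHat)
          (invariantsSubgroup I M (rhoI I M ρ)) (rhoZ I M ρ)) := by
    refine Nat.card_congr (Equiv.trans (Equiv.subtypeEquivRight ?_)
      (Equiv.ofInjective _ hinj).symm)
    intro c
    rw [AddMonoidHom.mem_ker]
    exact (hexact c).symm
  rw [d1, d2, d3, d4, hc2, mul_comm]
end

section
/- Let H be a finite abelian p-group and α a nonzero class in H²(H, 𝔽_p) (trivial action) whose corresponding central extension 1 → 𝔽_p → H̃ → H → 1 has H̃ abelian. Then there exists a nontrivial cyclic subgroup D ≤ H whose preimage in H̃ is cyclic, and the restriction of α to H²(D, 𝔽_p) is nonzero. -/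
lemma zpowers_isCyclic' {G : Type*} [Group G] (g : G) : IsCyclic (Subgroup.zpowers g) := by
  refine ⟨⟨⟨g, Subgroup.mem_zpowers g⟩, ?_⟩⟩
  rintro ⟨x, n, rfl⟩
  exact ⟨n, by ext; simp⟩



/-- Let `H` be a finite abelian `p`-group and `α ∈ H²(H, 𝔽_p)` a nonzero class (trivial
action) whose corresponding central extension `1 → 𝔽_p → H̃ → H → 1` has `H̃` abelian.
(We phrase this via the extension itself: `π : H̃ → H` surjective with kernel of order `p`
and no splitting, corresponding to `α ≠ 0`.)  Then there exists a nontrivial cyclic subgroup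
`D ≤ H` whose preimage in `H̃` is cyclic and such that the restriction of `α` to
`H²(D, 𝔽_p)` is nonzero, i.e. the pulled-back extension `1 → 𝔽_p → π⁻¹(D) → D → 1`
does not split. -/
theorem exists_cyclic_subgroup_nonsplit (p : ℕ) (hp : p.Prime)
    (H : Type*) [CommGroup H] [Finite H] (hH : IsPGroup p H)
    (Htil : Type*) [CommGroup Htil] [Finite Htil]
    (π : Htil →* H) (hsurj : Function.Surjective π)
    (hker : Nat.card π.ker = p)
    (hnonsplit : ¬ ∃ s : H →* Htil, ∀ h : H, π (s h) = h) :
    ∃ D : Subgroup H, D ≠ ⊥ ∧ IsCyclic D ∧ IsCyclic (D.comap π) ∧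
      ¬ ∃ s : D →* Htil, ∀ d : D, π (s d) = (d : H) := by
  haveI : Fact p.Prime := ⟨hp⟩
  -- pick a nontrivial element of the kernel
  haveI : Nontrivial π.ker := Finite.one_lt_card_iff_nontrivial.mp (by rw [hker]; exact hp.one_lt)
  obtain ⟨zz, hzz⟩ := exists_ne (1 : π.ker)
  obtain ⟨z, hzker⟩ := zz
  have hz1 : z ≠ 1 := fun h => hzz (Subtype.ext h)
  have hmem : ∀ x ∈ π.ker, ∃ m : ℤ, z ^ m = x := by
    intro x hx
    obtain ⟨m, hm⟩ := mem_zpowers_of_prime_card (G := π.ker) hker hzz (g' := ⟨x, hx⟩)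
    exact ⟨m, by simpa [Subtype.ext_iff] using hm⟩
  have hzp : z ^ p = 1 := by
    have : (⟨z, hzker⟩ : π.ker) ^ p = 1 := by rw [← hker]; exact pow_card_eq_one'
    simpa [Subtype.ext_iff] using this
  have hπz : π z = 1 := hzker
  -- Step 1: z is a p-th power
  have hzpow : ∃ y : Htil, y ^ p = z := by
    by_contra hny
    push_neg at hny
    set Q : Subgroup Htil := (powMonoidHom p : Htil →* Htil).range with hQ
    have hznQ : (QuotientGroup.mk z : Htil ⧸ Q) ≠ 1 := by
      rw [Ne, QuotientGroup.eq_one_iff]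
      rintro ⟨y, hy⟩
      exact hny y hy
    haveI : Module (ZMod p) (Additive (Htil ⧸ Q)) := AddCommGroup.zmodModule (by
      intro x
      have : (x.toMul) ^ p = 1 := by
        induction x.toMul using QuotientGroup.induction_on with
        | H w =>
          rw [← QuotientGroup.mk_pow, QuotientGroup.eq_one_iff]
          exact ⟨w, rfl⟩
      exact this)
    have hz0 : (Additive.ofMul (QuotientGroup.mk z : Htil ⧸ Q)) ≠ 0 := by
      simpa using hznQ
    obtain ⟨φ, hφ⟩ : ∃ φ : Module.Dual (ZMod p) (Additive (Htil ⧸ Q)),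
        φ (Additive.ofMul (QuotientGroup.mk z : Htil ⧸ Q)) ≠ 0 := by
      by_contra hc
      push_neg at hc
      exact hz0 ((Module.forall_dual_apply_eq_zero_iff (ZMod p) _).mp hc)
    set f : Htil → ZMod p := fun x => φ (Additive.ofMul (QuotientGroup.mk x : Htil ⧸ Q)) with hf
    set c : ZMod p := f z with hcdef
    have hc : c ≠ 0 := hφ
    set g : Htil →* Multiplicative (ZMod p) :=
      { toFun := fun x => Multiplicative.ofAdd (f x)
        map_one' := by simp [hf]
        map_mul' := by intro x y; simp [hf, QuotientGroup.mk_mul] } with hg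
    have hfz : ∀ n : ℤ, f (z ^ n) = n • c := by
      intro n
      simp only [hf, hcdef, QuotientGroup.mk_zpow]
      rw [← map_zsmul φ]
      congr 1
    have hbij : Function.Bijective (π.comp g.ker.subtype) := by
      constructor
      · rw [injective_iff_map_eq_one]
        rintro ⟨a, haK⟩ ha
        have haker : a ∈ π.ker := ha
        obtain ⟨m, rfl⟩ := hmem a haker
        have hga : f (z ^ m) = 0 := by
          have hk1 : g (z ^ m) = 1 := haK
          simpa [hg, hf] using congrArg Multiplicative.toAdd hk1
        rw [hfz] at hga
        have hm0 : (m : ZMod p) = 0 := by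
          have hga' : (m : ZMod p) * c = 0 := by simpa [zsmul_eq_mul] using hga
          rcases mul_eq_zero.mp hga' with h | h
          · exact h
          · exact absurd h hc
        obtain ⟨t, rfl⟩ := (ZMod.intCast_zmod_eq_zero_iff_dvd m p).mp hm0
        ext
        show z ^ ((p : ℤ) * t) = 1
        rw [zpow_mul, zpow_natCast, hzp, one_zpow]
      · intro h
        obtain ⟨x, hx⟩ := hsurj h
        set j : ℕ := ((-f x) * c⁻¹).val with hj
        have hmemK : x * z ^ j ∈ g.ker := by
          rw [MonoidHom.mem_ker]
          have : f (x * z ^ j) = f x + f (z ^ j) := by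
            simp [hf, QuotientGroup.mk_mul]
          have hfzj : f (z ^ j) = (j : ZMod p) * c := by
            have := hfz (j : ℤ)
            rw [zpow_natCast] at this
            simpa [zsmul_eq_mul] using this
          have hjc : (j : ZMod p) = (-f x) * c⁻¹ := by
            rw [hj, ZMod.natCast_val, ZMod.cast_id]
          have : f (x * z ^ j) = 0 := by
            rw [this, hfzj, hjc, neg_mul, neg_mul, mul_assoc, inv_mul_cancel₀ hc, mul_one,
              add_neg_cancel]
          simp [hg, this]
        refine ⟨⟨x * z ^ j, hmemK⟩, ?_⟩
        show π (x * z ^ j) = h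
        rw [map_mul, map_pow, hπz, one_pow, mul_one, hx]
    exact hnonsplit ⟨g.ker.subtype.comp (MulEquiv.ofBijective _ hbij).symm.toMonoidHom,
      fun h => (MulEquiv.ofBijective _ hbij).apply_symm_apply h⟩
  obtain ⟨y, hy⟩ := hzpow
  -- Step 2
  set d : H := π y with hd
  have hd1 : d ≠ 1 := by
    intro h
    obtain ⟨m, hm⟩ := hmem y h
    have : z = 1 := by
      rw [← hy, ← hm, ← zpow_natCast, ← zpow_mul, mul_comm, zpow_mul, zpow_natCast, hzp, one_zpow]
    exact hz1 this
  refine ⟨Subgroup.zpowers d, by simpa [Subgroup.zpowers_eq_bot] using hd1, zpowers_isCyclic' d, ?_, ?_⟩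
  · have hcomap : (Subgroup.zpowers d).comap π = Subgroup.zpowers y := by
      ext x
      constructor
      · intro hx
        obtain ⟨n, hn⟩ := hx
        have hn' : d ^ n = π x := hn
        have hxk : x * (y ^ n)⁻¹ ∈ π.ker := by
          rw [MonoidHom.mem_ker, map_mul, map_inv, map_zpow, ← hd, hn', mul_inv_cancel]
        obtain ⟨m, hm⟩ := hmem _ hxk
        have hx' : x = y ^ n * z ^ m := by
          rw [hm, mul_comm x, mul_inv_cancel_left]
        refine ⟨n + (p : ℤ) * m, ?_⟩
        show y ^ (n + (p : ℤ) * m) = x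
        rw [zpow_add, zpow_mul, zpow_natCast, hy, hx']
      · rintro ⟨n, rfl⟩
        exact ⟨n, by rw [map_zpow]⟩
    rw [hcomap]
    exact zpowers_isCyclic' y
  · rintro ⟨s, hs⟩
    have hdD : d ∈ Subgroup.zpowers d := Subgroup.mem_zpowers d
    set u : Htil := s ⟨d, hdD⟩ with hu
    have hπu : π u = d := hs _
    have humem : u * y⁻¹ ∈ π.ker := by
      rw [MonoidHom.mem_ker, map_mul, map_inv, hπu, ← hd, mul_inv_cancel]
    obtain ⟨m, hm⟩ := hmem _ humem
    have hu' : u = y * z ^ m := by rw [hm, mul_comm u, mul_inv_cancel_left]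
    have hdp : (⟨d, hdD⟩ : Subgroup.zpowers d) ^ p = 1 := by
      ext
      show d ^ p = 1
      rw [hd, ← map_pow, hy, hπz]
    have hup : u ^ p = 1 := by
      rw [hu, ← map_pow, hdp, map_one]
    have hzmp : (z ^ m) ^ p = 1 := by
      rw [← zpow_natCast (z ^ m), ← zpow_mul, mul_comm m, zpow_mul, zpow_natCast, hzp, one_zpow]
    rw [hu', mul_pow, hy, hzmp] at hup
    exact hz1 (by simpa using hup)
end

section
/- Let A be a finite abelian p-group, p an odd prime, e a nontrivial primitive idempotent of ℚ_p[A], and eℤ_p[A] := {ex : x ∈ ℤ_p[A]} ⊆ ℚ_p[A]. Then eℤ_p[A] is a local ring; moreover, if A is elementary abelian (exponent p), then p·eℤ_p[A] is contained in the ideal I_e := ⋂_{γ ∈ A, γ ≠ 0} (1−γ, Σ_{j=1}^{ord γ} γ^j)·eℤ_p[A]. -/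
open MonoidAlgebra

/-- The coefficient-extension map `ℤ_p[A] → ℚ_p[A]`. -/
noncomputable def coeffMap (p : ℕ) [Fact p.Prime] (A : Type) [CommGroup A] :
    MonoidAlgebra ℤ_[p] A →ₐ[ℤ_[p]] MonoidAlgebra ℚ_[p] A :=
  MonoidAlgebra.lift ℤ_[p] (MonoidAlgebra ℚ_[p] A) A (MonoidAlgebra.of ℚ_[p] A)

/-- The kernel of `x ↦ e·x : ℤ_p[A] → e ℚ_p[A]`; the ring `e ℤ_p[A]` is the quotient of
`ℤ_p[A]` by this ideal. -/
noncomputable def eKernel (p : ℕ) [Fact p.Prime] (A : Type) [CommGroup A]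
    (e : MonoidAlgebra ℚ_[p] A) : Ideal (MonoidAlgebra ℤ_[p] A) where
  carrier := {x | e * coeffMap p A x = 0}
  zero_mem' := by simp
  add_mem' := fun {x y} hx hy => by
    simp only [Set.mem_setOf_eq] at *
    rw [map_add, mul_add, hx, hy, add_zero]
  smul_mem' := fun c x hx => by
    simp only [Set.mem_setOf_eq, smul_eq_mul] at *
    rw [map_mul, mul_left_comm, hx, mul_zero]

private lemma geom_helper {R : Type*} [CommRing R] (g : R) (n : ℕ) :
    (∑ j ∈ Finset.range n, g ^ (j + 1)) =
      (n : R) + (g - 1) * ∑ j ∈ Finset.range n, ∑ i ∈ Finset.range (j + 1), g ^ i := by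
  induction n with
  | zero => simp
  | succ n ih =>
    rw [Finset.sum_range_succ, Finset.sum_range_succ (f := fun j => ∑ i ∈ Finset.range (j + 1), g ^ i)]
    push_cast
    linear_combination ih - geom_sum_mul g (n + 1)

/-- Let `A` be a finite abelian `p`-group (`p` odd), `e` a nontrivial primitive idempotent of
`ℚ_p[A]`, and `e ℤ_p[A] ≅ ℤ_p[A]/ker(x ↦ ex)` the associated quotient ring.  Then
`e ℤ_p[A]` is a local ring; moreover, if `A` is elementary abelian then
`p · e ℤ_p[A] ⊆ I_e := ⋂_{γ ≠ 1} (1 − γ, Σ_{j=1}^{ord γ} γ^j) e ℤ_p[A]`. -/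
theorem eZpA_isLocalRing_and_p_mem_Ie (p : ℕ) (hp : p.Prime) [Fact p.Prime] (hodd : Odd p)
    (A : Type) [CommGroup A] [Fintype A] (hA : ∀ a : A, ∃ n : ℕ, a ^ (p ^ n) = 1)
    (e : MonoidAlgebra ℚ_[p] A)
    (hidem : e * e = e) (hne : e ≠ 0)
    (hprim : ¬ ∃ f g : MonoidAlgebra ℚ_[p] A,
      f ≠ 0 ∧ g ≠ 0 ∧ f * f = f ∧ g * g = g ∧ f * g = 0 ∧ e = f + g)
    (hnontriv : e ≠ (Nat.card A : ℚ_[p])⁻¹ • ∑ γ : A, MonoidAlgebra.of ℚ_[p] A γ) :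
    IsLocalRing (MonoidAlgebra ℤ_[p] A ⧸ eKernel p A e) ∧
    ((∀ a : A, a ^ p = 1) →
      Ideal.span {(p : MonoidAlgebra ℤ_[p] A ⧸ eKernel p A e)} ≤
        ⨅ γ ∈ {γ : A | γ ≠ 1},
          Ideal.span {Ideal.Quotient.mk (eKernel p A e) (1 - MonoidAlgebra.of ℤ_[p] A γ),
            Ideal.Quotient.mk (eKernel p A e)
              (∑ j ∈ Finset.range (orderOf γ), (MonoidAlgebra.of ℤ_[p] A γ) ^ (j + 1))}) := by
  classical
  -- the augmentation map and the residue map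
  set aug : MonoidAlgebra ℤ_[p] A →ₐ[ℤ_[p]] ℤ_[p] :=
    MonoidAlgebra.lift ℤ_[p] ℤ_[p] A 1 with haugdef
  set π : MonoidAlgebra ℤ_[p] A →+* ZMod p :=
    (PadicInt.toZMod).comp aug.toRingHom with hπdef
  have hπsurj : Function.Surjective π := by
    intro z
    refine ⟨((z.val : ℕ) : MonoidAlgebra ℤ_[p] A), ?_⟩
    rw [map_natCast]
    simp [ZMod.natCast_val, ZMod.cast_id]
  have hker : (RingHom.ker π).IsMaximal := RingHom.ker_isMaximal_of_surjective π hπsurj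
  haveI : Module.Finite ℤ_[p] (MonoidAlgebra ℤ_[p] A) :=
    Module.Finite.of_basis (MonoidAlgebra.basis A ℤ_[p])
  haveI : Algebra.IsIntegral ℤ_[p] (MonoidAlgebra ℤ_[p] A) := Algebra.IsIntegral.of_finite _ _
  -- every maximal ideal contains ker π
  have hle : ∀ M : Ideal (MonoidAlgebra ℤ_[p] A), M.IsMaximal → RingHom.ker π ≤ M := by
    intro M hM x hx
    have hcomap : (M.comap (algebraMap ℤ_[p] (MonoidAlgebra ℤ_[p] A))).IsMaximal :=
      Ideal.isMaximal_comap_of_isIntegral_of_isMaximal M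
    have hcm : M.comap (algebraMap ℤ_[p] (MonoidAlgebra ℤ_[p] A)) =
        IsLocalRing.maximalIdeal ℤ_[p] := IsLocalRing.eq_maximalIdeal hcomap
    have hpM : (p : MonoidAlgebra ℤ_[p] A) ∈ M := by
      have h1 : (p : ℤ_[p]) ∈ IsLocalRing.maximalIdeal ℤ_[p] := by
        rw [PadicInt.maximalIdeal_eq_span_p]; exact Ideal.subset_span rfl
      rw [← hcm] at h1
      simpa using h1
    have hγM : ∀ γ : A, MonoidAlgebra.of ℤ_[p] A γ - 1 ∈ M := by
      intro γ
      obtain ⟨n, hn⟩ := hA γ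
      obtain ⟨r, hr⟩ :=
        (Commute.all (MonoidAlgebra.of ℤ_[p] A γ) (-1)).exists_add_pow_prime_pow_eq hp n
      have hg : (MonoidAlgebra.of ℤ_[p] A γ) ^ (p ^ n) = 1 := by
        rw [← map_pow, hn, map_one]
      have hodd' : Odd (p ^ n) := hodd.pow
      have heq : (MonoidAlgebra.of ℤ_[p] A γ - 1) ^ (p ^ n) = p * (-(MonoidAlgebra.of ℤ_[p] A γ * r)) := by
        rw [sub_eq_add_neg, hr, hg, hodd'.neg_one_pow]; ring
      have hmem : (MonoidAlgebra.of ℤ_[p] A γ - 1) ^ (p ^ n) ∈ M := by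
        rw [heq]; exact M.mul_mem_right _ hpM
      exact hM.isPrime.mem_of_pow_mem _ hmem
    -- x ∈ ker π : decompose x
    have hx' : PadicInt.toZMod (aug x) = 0 := by
      rwa [RingHom.mem_ker, hπdef, RingHom.comp_apply] at hx
    have haug : aug x ∈ IsLocalRing.maximalIdeal ℤ_[p] := by
      rw [← PadicInt.ker_toZMod]; exact hx'
    obtain ⟨c, hc⟩ : ∃ c, aug x = p * c := by
      rw [PadicInt.maximalIdeal_eq_span_p, Ideal.mem_span_singleton] at haug
      exact haug
    have haugx : aug x = ∑ γ ∈ x.coeff.support, x.coeff γ := by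
      rw [haugdef, MonoidAlgebra.lift_apply]
      simp [Finsupp.sum]
    have hxsum : (∑ γ ∈ x.coeff.support, x.coeff γ • MonoidAlgebra.of ℤ_[p] A γ) = x := by
      conv_rhs => rw [← MonoidAlgebra.sum_coeff_single x]
      rw [Finsupp.sum]
      refine Finset.sum_congr rfl fun γ _ => ?_
      rw [MonoidAlgebra.of_apply, MonoidAlgebra.smul_single', mul_one]
    have hdecomp : x = (∑ γ ∈ x.coeff.support, x.coeff γ • (MonoidAlgebra.of ℤ_[p] A γ - 1)) +
        algebraMap ℤ_[p] (MonoidAlgebra ℤ_[p] A) (aug x) := by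
      simp only [smul_sub]
      rw [Finset.sum_sub_distrib, hxsum, haugx, map_sum]
      simp [Algebra.algebraMap_eq_smul_one]
    rw [hdecomp]
    refine M.add_mem (Ideal.sum_mem M fun γ _ => ?_) ?_
    · rw [Algebra.smul_def]; exact M.mul_mem_left _ (hγM γ)
    · rw [hc, map_mul, map_natCast]; exact M.mul_mem_right _ hpM
  have hlocR : IsLocalRing (MonoidAlgebra ℤ_[p] A) :=
    IsLocalRing.of_unique_max_ideal
      ⟨RingHom.ker π, hker, fun M hM => (hker.eq_of_le hM.1.1 (hle M hM)).symm⟩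
  have hKne : eKernel p A e ≠ ⊤ := by
    intro h
    have h1 : (1 : MonoidAlgebra ℤ_[p] A) ∈ eKernel p A e := h ▸ Submodule.mem_top
    have h2 : e * coeffMap p A 1 = 0 := h1
    rw [map_one, mul_one] at h2
    exact hne h2
  haveI := Ideal.Quotient.nontrivial_iff.mpr hKne
  have loc : IsLocalRing (MonoidAlgebra ℤ_[p] A ⧸ eKernel p A e) :=
    IsLocalRing.of_surjective' (Ideal.Quotient.mk _) Ideal.Quotient.mk_surjective
  refine ⟨loc, fun hEA => ?_⟩
  rw [Ideal.span_le, Set.singleton_subset_iff, SetLike.mem_coe]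
  simp only [Ideal.mem_iInf]
  intro γ hγ
  have hγ1 : γ ≠ 1 := hγ
  have hord : orderOf γ = p := by
    have h1 : orderOf γ ∣ p := orderOf_dvd_of_pow_eq_one (hEA γ)
    rcases hp.eq_one_or_self_of_dvd _ h1 with h | h
    · exact absurd (orderOf_eq_one_iff.mp h) hγ1
    · exact h
  rw [Ideal.mem_span_pair]
  set g := MonoidAlgebra.of ℤ_[p] A γ with hg
  refine ⟨Ideal.Quotient.mk (eKernel p A e)
    (∑ j ∈ Finset.range (orderOf γ), ∑ i ∈ Finset.range (j + 1), g ^ i), 1, ?_⟩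
  rw [one_mul, ← map_mul, ← map_add]
  have key : (∑ j ∈ Finset.range (orderOf γ), ∑ i ∈ Finset.range (j + 1), g ^ i) * (1 - g) +
      (∑ j ∈ Finset.range (orderOf γ), g ^ (j + 1)) = ((orderOf γ : ℕ) : MonoidAlgebra ℤ_[p] A) := by
    linear_combination geom_helper g (orderOf γ)
  rw [key, hord, map_natCast]
end
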